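/- Let K be a 3DM instance on node sets of size q in which every node occurs in at least one hyperedge, and let σ(K) be the associated spanUFP instance. If K has a hypermatching of size p, then σ(K) has a feasible solution consisting of p+7q tasks. -/

import Mathlib

/-- `ρ = max {29, 3q}`. -/
def rho (q : ℕ) : ℕ := max 29 (3 * q)

/-- The number `x'_i = iρ + 1` associated to the node `x_i`. -/
def xnum (q i : ℕ) : ℤ := (i : ℤ) * (rho q : ℤ) + 1

/-- The number `y'_j = jρ² + 2` associated to the node `y_j`. -/
def ynum (q j : ℕ) : ℤ := (j : ℤ) * (rho q : ℤ) ^ 2 + 2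

/-- The number `z'_k = kρ³ + 4` associated to the node `z_k`. -/
def znum (q k : ℕ) : ℤ := (k : ℤ) * (rho q : ℤ) ^ 3 + 4

/-- The number `h'_ℓ = -iρ - jρ² - kρ³ - 7` associated to the hyperedge `h_ℓ = (x_i, y_j, z_k)`. -/
def hnum (q : ℕ) (h : ℕ × ℕ × ℕ) : ℤ :=
  -((h.1 : ℤ) * (rho q : ℤ)) - (h.2.1 : ℤ) * (rho q : ℤ) ^ 2 - (h.2.2 : ℤ) * (rho q : ℤ) ^ 3 - 7

/-- The set `Q(K)` of the `3q + m` integers associated to a 3DM instance `K = (q, E)`. -/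
def QK (q : ℕ) (E : Finset (ℕ × ℕ × ℕ)) : Finset ℤ :=
  ((Finset.Icc 1 q).image (xnum q)) ∪ ((Finset.Icc 1 q).image (ynum q)) ∪
    ((Finset.Icc 1 q).image (znum q)) ∪ (E.image (hnum q))

/-- `(q, E)` is a 3DM instance: every hyperedge is a triple of node indices in `{1, …, q}`
(`X`, `Y` and `Z` are identified with `{1, …, q}`). -/
def ValidE (q : ℕ) (E : Finset (ℕ × ℕ × ℕ)) : Prop :=
  ∀ h ∈ E, h.1 ∈ Finset.Icc 1 q ∧ h.2.1 ∈ Finset.Icc 1 q ∧ h.2.2 ∈ Finset.Icc 1 q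

/-- A hypermatching: no two distinct hyperedges share a node. -/
def Matching (M : Finset (ℕ × ℕ × ℕ)) : Prop :=
  ∀ h ∈ M, ∀ h' ∈ M, h ≠ h' → h.1 ≠ h'.1 ∧ h.2.1 ≠ h'.2.1 ∧ h.2.2 ≠ h'.2.2

/-- `μ = 1 + max_{u' ∈ Q(K)} 10|u'|`. -/
def mu (q : ℕ) (E : Finset (ℕ × ℕ × ℕ)) : ℕ :=
  1 + (QK q E).sup (fun u => 10 * u.natAbs)

/-- `A = 5μ + 4`. -/
def Aval (q : ℕ) (E : Finset (ℕ × ℕ × ℕ)) : ℕ := 5 * mu q E + 4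

/-- The path of `σ(K)` has `(2A+1)q - 1` edges; edges are identified with the
integers `0, 1, …, (2A+1)q - 2`. -/
def numEdges (q : ℕ) (E : Finset (ℕ × ℕ × ℕ)) : ℤ := (2 * (Aval q E : ℤ) + 1) * q - 1

/-- The capacity profile of `σ(K)`: within each block of `2A` consecutive edges, the
leftmost `A` edges have capacity `4A + 4` and the rightmost `A` edges have capacity `4A`;
blocks are separated by single edges of capacity `0`. -/
def cap (q : ℕ) (E : Finset (ℕ × ℕ × ℕ)) (e : ℤ) : ℤ :=
  let A : ℤ := (Aval q E : ℤ)
  let r := e % (2 * A + 1)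
  if r < A then 4 * A + 4 else if r < 2 * A then 4 * A else 0

/-- An element `u ∈ X ∪ Y ∪ Z ∪ E` of the 3DM instance. -/
inductive Elem where
  | X : ℕ → Elem
  | Y : ℕ → Elem
  | Z : ℕ → Elem
  | H : ℕ × ℕ × ℕ → Elem
deriving DecidableEq

/-- The number `u' ∈ Q(K)` associated to `u ∈ X ∪ Y ∪ Z ∪ E`. -/
def elemVal (q : ℕ) : Elem → ℤ
  | .X i => xnum q i
  | .Y j => ynum q j
  | .Z k => znum q k
  | .H h => hnum q h

/-- `u` is an actual element of the instance `(q, E)`. -/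
def validElem (q : ℕ) (E : Finset (ℕ × ℕ × ℕ)) : Elem → Prop
  | .X i => i ∈ Finset.Icc 1 q
  | .Y j => j ∈ Finset.Icc 1 q
  | .Z k => k ∈ Finset.Icc 1 q
  | .H h => h ∈ E

/-- A task of `σ(K)` is a pair `(u, s)` with `u ∈ X ∪ Y ∪ Z ∪ E`; `s = true` encodes the
task `t_L(u)` and `s = false` encodes the task `t_R(u)`. All tasks have weight 1. -/
abbrev UTask := Elem × Bool

/-- The length of a task: `t_L(u)` has length `A - 10u'`, `t_R(u)` has length `A + 10u'`. -/
def taskLen (q : ℕ) (E : Finset (ℕ × ℕ × ℕ)) (t : UTask) : ℤ :=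
  if t.2 then (Aval q E : ℤ) - 10 * elemVal q t.1
  else (Aval q E : ℤ) + 10 * elemVal q t.1

/-- The demand of a task: `t_L(u)` has demand `A + 10u' + 1`, `t_R(u)` has demand `A - 10u'`. -/
def taskDem (q : ℕ) (E : Finset (ℕ × ℕ × ℕ)) (t : UTask) : ℤ :=
  if t.2 then (Aval q E : ℤ) + 10 * elemVal q t.1 + 1
  else (Aval q E : ℤ) - 10 * elemVal q t.1

/-- The schedule of task `t`: the contiguous interval of `taskLen` edges starting at
edge `start t`. -/
noncomputable def sched (q : ℕ) (E : Finset (ℕ × ℕ × ℕ)) (start : UTask → ℤ) (t : UTask) : Finset ℤ :=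
  Finset.Ico (start t) (start t + taskLen q E t)

/-- `(S, start)` is a feasible solution of `σ(K)`: every selected task is a task of the
instance, is scheduled (contiguously, with exactly its length) within the path, and on every
edge `e` the total demand of the selected tasks whose schedule contains `e` is at most the
capacity of `e`. -/
def Feasible (q : ℕ) (E : Finset (ℕ × ℕ × ℕ)) (S : Finset UTask) (start : UTask → ℤ) : Prop :=
  (∀ t ∈ S, validElem q E t.1) ∧
  (∀ t ∈ S, 0 ≤ start t ∧ start t + taskLen q E t ≤ numEdges q E) ∧
  (∀ e : ℤ, 0 ≤ e → e < numEdges q E →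
    ∑ t ∈ S.filter (fun t => e ∈ sched q E start t), taskDem q E t ≤ cap q E e)

/-- The first edge of the `b`-th block (`b ∈ {0, …, q-1}`). -/
def blockStart (q : ℕ) (E : Finset (ℕ × ℕ × ℕ)) (b : ℕ) : ℤ :=
  (b : ℤ) * (2 * (Aval q E : ℤ) + 1)

/-- The `b`-th block of `2A` consecutive edges (`b ∈ {0, …, q-1}`). -/
noncomputable def block (q : ℕ) (E : Finset (ℕ × ℕ × ℕ)) (b : ℕ) : Finset ℤ :=
  Finset.Ico (blockStart q E b) (blockStart q E b + 2 * (Aval q E : ℤ))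


/-! ### Auxiliary development -/

section Aux

lemma mem_QK_bound (q : ℕ) (E : Finset (ℕ × ℕ × ℕ)) {v : ℤ} (hv : v ∈ QK q E) :
    10 * |v| ≤ (mu q E : ℤ) - 1 := by
  set n : ℕ := (QK q E).sup (fun u => 10 * u.natAbs) with hn
  have h1 : 10 * v.natAbs ≤ n := Finset.le_sup (f := fun u : ℤ => 10 * u.natAbs) hv
  have h2 : ((10 * v.natAbs : ℕ) : ℤ) ≤ (n : ℤ) := by exact_mod_cast h1
  have h3 : ((10 * v.natAbs : ℕ) : ℤ) = 10 * |v| := by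
    rw [Int.abs_eq_natAbs]; push_cast; ring
  have h4 : (mu q E : ℤ) = 1 + (n : ℤ) := by rw [mu, ← hn]; push_cast; ring
  omega

lemma elemVal_QK (q : ℕ) (E : Finset (ℕ × ℕ × ℕ)) {u : Elem} (hu : validElem q E u) :
    elemVal q u ∈ QK q E := by
  cases u with
  | X i =>
    simp only [QK, Finset.mem_union, Finset.mem_image]
    exact Or.inl (Or.inl (Or.inl ⟨i, hu, rfl⟩))
  | Y j =>
    simp only [QK, Finset.mem_union, Finset.mem_image]
    exact Or.inl (Or.inl (Or.inr ⟨j, hu, rfl⟩))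
  | Z k =>
    simp only [QK, Finset.mem_union, Finset.mem_image]
    exact Or.inl (Or.inr ⟨k, hu, rfl⟩)
  | H h =>
    simp only [QK, Finset.mem_union, Finset.mem_image]
    exact Or.inr ⟨h, hu, rfl⟩

lemma mu_one (q : ℕ) (E : Finset (ℕ × ℕ × ℕ)) : (1 : ℤ) ≤ (mu q E : ℤ) := by
  have : 1 ≤ mu q E := by rw [mu]; omega
  exact_mod_cast this

lemma Aval_eq (q : ℕ) (E : Finset (ℕ × ℕ × ℕ)) :
    (Aval q E : ℤ) = 5 * (mu q E : ℤ) + 4 := by rw [Aval]; push_cast; ring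

lemma elemVal_bound (q : ℕ) (E : Finset (ℕ × ℕ × ℕ)) {u : Elem} (hu : validElem q E u) :
    10 * |elemVal q u| ≤ (mu q E : ℤ) - 1 :=
  mem_QK_bound q E (elemVal_QK q E hu)

lemma xnum_pos (q i : ℕ) : 1 ≤ xnum q i := by
  have : (0:ℤ) ≤ (i : ℤ) * (rho q : ℤ) := by positivity
  rw [xnum]; omega

lemma ynum_pos (q j : ℕ) : 1 ≤ ynum q j := by
  have : (0:ℤ) ≤ (j : ℤ) * (rho q : ℤ) ^ 2 := by positivity
  rw [ynum]; omega

lemma znum_pos (q k : ℕ) : 1 ≤ znum q k := by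
  have : (0:ℤ) ≤ (k : ℤ) * (rho q : ℤ) ^ 3 := by positivity
  rw [znum]; omega

lemma hnum_neg (q : ℕ) (h : ℕ × ℕ × ℕ) : hnum q h ≤ -7 := by
  have h1 : (0:ℤ) ≤ (h.1 : ℤ) * (rho q : ℤ) := by positivity
  have h2 : (0:ℤ) ≤ (h.2.1 : ℤ) * (rho q : ℤ) ^ 2 := by positivity
  have h3 : (0:ℤ) ≤ (h.2.2 : ℤ) * (rho q : ℤ) ^ 3 := by positivity
  rw [hnum]; omega

/-- The starting offset of a task inside its block. -/
def relStart (q : ℕ) (E : Finset (ℕ × ℕ × ℕ)) (t : UTask) : ℤ :=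
  if t.2 then 0 else (Aval q E : ℤ) - 10 * elemVal q t.1

/-- The sum `x' + y' + z'` of the numbers of a triple of nodes. -/
def sB (q : ℕ) (c : ℕ × ℕ × ℕ) : ℤ := xnum q c.1 + ynum q c.2.1 + znum q c.2.2

/-- The tasks placed in block `b`. -/
def elemsOf (q p : ℕ) (tri hedge : ℕ → ℕ × ℕ × ℕ) (b : ℕ) : Finset UTask :=
  if b < p then
    {(.X (tri b).1, true), (.X (tri b).1, false),
     (.Y (tri b).2.1, true), (.Y (tri b).2.1, false),
     (.Z (tri b).2.2, true), (.Z (tri b).2.2, false),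
     (.H (hedge b), true), (.H (hedge b), false)}
  else
    {(.X (tri b).1, true), (.X (tri b).1, false),
     (.Y (tri b).2.1, true), (.Y (tri b).2.1, false),
     (.Z (tri b).2.2, true), (.Z (tri b).2.2, false),
     (.H (hedge b), decide (sB q (tri b) + hnum q (hedge b) < 0))}

/-- The start of each task. -/
def startF (q : ℕ) (E : Finset (ℕ × ℕ × ℕ)) (p : ℕ) (tri hedge : ℕ → ℕ × ℕ × ℕ)
    (t : UTask) : ℤ :=
  (∑ b ∈ Finset.range q, if t ∈ elemsOf q p tri hedge b then blockStart q E b else 0)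
    + relStart q E t

lemma mem_elemsOf {q p : ℕ} {tri hedge : ℕ → ℕ × ℕ × ℕ} {b : ℕ} {t : UTask}
    (ht : t ∈ elemsOf q p tri hedge b) :
    t.1 = .X (tri b).1 ∨ t.1 = .Y (tri b).2.1 ∨ t.1 = .Z (tri b).2.2 ∨ t.1 = .H (hedge b) := by
  by_cases hb : b < p
  · rw [elemsOf, if_pos hb] at ht
    simp only [Finset.mem_insert, Finset.mem_singleton] at ht
    rcases ht with rfl|rfl|rfl|rfl|rfl|rfl|rfl|rfl <;> simp
  · rw [elemsOf, if_neg hb] at ht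
    simp only [Finset.mem_insert, Finset.mem_singleton] at ht
    rcases ht with rfl|rfl|rfl|rfl|rfl|rfl|rfl <;> simp

lemma elemsOf_unique {q p : ℕ} {tri hedge : ℕ → ℕ × ℕ × ℕ}
    (H3 : ∀ b, b < q → ∀ b', b' < q → b ≠ b' →
      (tri b).1 ≠ (tri b').1 ∧ (tri b).2.1 ≠ (tri b').2.1 ∧ (tri b).2.2 ≠ (tri b').2.2 ∧
        hedge b ≠ hedge b')
    {b b' : ℕ} (hb : b < q) (hb' : b' < q) {t : UTask}
    (ht : t ∈ elemsOf q p tri hedge b) (ht' : t ∈ elemsOf q p tri hedge b') : b = b' := by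
  by_contra hne
  obtain ⟨h1, h2, h3, h4⟩ := H3 b hb b' hb' hne
  rcases mem_elemsOf ht with h|h|h|h <;> rcases mem_elemsOf ht' with h'|h'|h'|h' <;>
    rw [h] at h' <;> simp_all

lemma startF_eq {q : ℕ} (E : Finset (ℕ × ℕ × ℕ)) {p : ℕ} {tri hedge : ℕ → ℕ × ℕ × ℕ}
    (H3 : ∀ b, b < q → ∀ b', b' < q → b ≠ b' →
      (tri b).1 ≠ (tri b').1 ∧ (tri b).2.1 ≠ (tri b').2.1 ∧ (tri b).2.2 ≠ (tri b').2.2 ∧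
        hedge b ≠ hedge b')
    {b : ℕ} (hb : b < q) {t : UTask} (ht : t ∈ elemsOf q p tri hedge b) :
    startF q E p tri hedge t = blockStart q E b + relStart q E t := by
  rw [startF]
  have hs : (∑ b' ∈ Finset.range q,
      if t ∈ elemsOf q p tri hedge b' then blockStart q E b' else 0) = blockStart q E b := by
    rw [Finset.sum_eq_single_of_mem b (Finset.mem_range.2 hb)]
    · rw [if_pos ht]
    · intro b' hb' hne
      rw [if_neg]
      intro ht'
      exact hne (elemsOf_unique H3 (Finset.mem_range.1 hb') hb ht' ht)
  rw [hs]

lemma task_facts {q : ℕ} {E : Finset (ℕ × ℕ × ℕ)} {p : ℕ} {tri hedge : ℕ → ℕ × ℕ × ℕ}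
    (H1 : ∀ b, b < q → (tri b).1 ∈ Finset.Icc 1 q ∧ (tri b).2.1 ∈ Finset.Icc 1 q ∧
      (tri b).2.2 ∈ Finset.Icc 1 q)
    (H2 : ∀ b, b < q → hedge b ∈ E) {b : ℕ} (hb : b < q) {t : UTask}
    (ht : t ∈ elemsOf q p tri hedge b) :
    validElem q E t.1 ∧ 0 ≤ relStart q E t ∧
      relStart q E t + taskLen q E t ≤ 2 * (Aval q E : ℤ) := by
  have hval : validElem q E t.1 := by
    rcases mem_elemsOf ht with h|h|h|h <;> rw [h]
    exacts [(H1 b hb).1, (H1 b hb).2.1, (H1 b hb).2.2, H2 b hb]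
  refine ⟨hval, ?_, ?_⟩ <;>
  · have hB := elemVal_bound q E hval
    have h1 : elemVal q t.1 ≤ |elemVal q t.1| := le_abs_self _
    have h2 : -|elemVal q t.1| ≤ elemVal q t.1 := neg_abs_le _
    have h3 := mu_one q E
    have h4 := Aval_eq q E
    obtain ⟨u, s⟩ := t
    cases s <;> simp only [relStart, taskLen] <;> simp <;> linarith

lemma elemsOf_card (q p : ℕ) (tri hedge : ℕ → ℕ × ℕ × ℕ) (b : ℕ) :
    (elemsOf q p tri hedge b).card = if b < p then 8 else 7 := by
  rw [elemsOf]; split_ifs with hb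
  · rw [Finset.card_insert_of_notMem (by simp), Finset.card_insert_of_notMem (by simp),
      Finset.card_insert_of_notMem (by simp), Finset.card_insert_of_notMem (by simp),
      Finset.card_insert_of_notMem (by simp), Finset.card_insert_of_notMem (by simp),
      Finset.card_insert_of_notMem (by simp), Finset.card_singleton]
  · rw [Finset.card_insert_of_notMem (by simp), Finset.card_insert_of_notMem (by simp),
      Finset.card_insert_of_notMem (by simp), Finset.card_insert_of_notMem (by simp),
      Finset.card_insert_of_notMem (by simp), Finset.card_insert_of_notMem (by simp),
      Finset.card_singleton]


lemma cap_matched (A c e x y z h : ℤ) (hx : 1 ≤ x) (hy : 1 ≤ y) (hz : 1 ≤ z) (hh : h ≤ -7)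
    (hsum : x + y + z + h = 0) (he1 : c ≤ e) (he2 : e < c + 2 * A) :
    (if c ≤ e ∧ e < c + (A - 10 * x) then A + 10 * x + 1 else 0)
      + ((if c + (A - 10 * x) ≤ e ∧ e < c + (A - 10 * x) + (A + 10 * x) then A - 10 * x else 0)
      + ((if c ≤ e ∧ e < c + (A - 10 * y) then A + 10 * y + 1 else 0)
      + ((if c + (A - 10 * y) ≤ e ∧ e < c + (A - 10 * y) + (A + 10 * y) then A - 10 * y else 0)
      + ((if c ≤ e ∧ e < c + (A - 10 * z) then A + 10 * z + 1 else 0)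
      + ((if c + (A - 10 * z) ≤ e ∧ e < c + (A - 10 * z) + (A + 10 * z) then A - 10 * z else 0)
      + ((if c ≤ e ∧ e < c + (A - 10 * h) then A + 10 * h + 1 else 0)
      + (if c + (A - 10 * h) ≤ e ∧ e < c + (A - 10 * h) + (A + 10 * h) then A - 10 * h else 0)))))))
      ≤ if e - c < A then 4 * A + 4 else 4 * A := by
  split_ifs <;> omega

lemma cap_unL (A c e x y z h : ℤ) (hx : 1 ≤ x) (hy : 1 ≤ y) (hz : 1 ≤ z) (hh : h ≤ -7)
    (hsum : x + y + z + h ≤ 0) (he1 : c ≤ e) (he2 : e < c + 2 * A) :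
    (if c ≤ e ∧ e < c + (A - 10 * x) then A + 10 * x + 1 else 0)
      + ((if c + (A - 10 * x) ≤ e ∧ e < c + (A - 10 * x) + (A + 10 * x) then A - 10 * x else 0)
      + ((if c ≤ e ∧ e < c + (A - 10 * y) then A + 10 * y + 1 else 0)
      + ((if c + (A - 10 * y) ≤ e ∧ e < c + (A - 10 * y) + (A + 10 * y) then A - 10 * y else 0)
      + ((if c ≤ e ∧ e < c + (A - 10 * z) then A + 10 * z + 1 else 0)
      + ((if c + (A - 10 * z) ≤ e ∧ e < c + (A - 10 * z) + (A + 10 * z) then A - 10 * z else 0)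
      + (if c ≤ e ∧ e < c + (A - 10 * h) then A + 10 * h + 1 else 0))))))
      ≤ if e - c < A then 4 * A + 4 else 4 * A := by
  split_ifs <;> omega

lemma cap_unR (A c e x y z h : ℤ) (hx : 1 ≤ x) (hy : 1 ≤ y) (hz : 1 ≤ z) (hh : h ≤ -7)
    (hsum : 0 ≤ x + y + z + h) (hsA : 10 * (x + y + z) ≤ A + 1)
    (he1 : c ≤ e) (he2 : e < c + 2 * A) :
    (if c ≤ e ∧ e < c + (A - 10 * x) then A + 10 * x + 1 else 0)
      + ((if c + (A - 10 * x) ≤ e ∧ e < c + (A - 10 * x) + (A + 10 * x) then A - 10 * x else 0)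
      + ((if c ≤ e ∧ e < c + (A - 10 * y) then A + 10 * y + 1 else 0)
      + ((if c + (A - 10 * y) ≤ e ∧ e < c + (A - 10 * y) + (A + 10 * y) then A - 10 * y else 0)
      + ((if c ≤ e ∧ e < c + (A - 10 * z) then A + 10 * z + 1 else 0)
      + ((if c + (A - 10 * z) ≤ e ∧ e < c + (A - 10 * z) + (A + 10 * z) then A - 10 * z else 0)
      + (if c + (A - 10 * h) ≤ e ∧ e < c + (A - 10 * h) + (A + 10 * h) then A - 10 * h else 0))))))
      ≤ if e - c < A then 4 * A + 4 else 4 * A := by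
  split_ifs <;> omega

set_option maxHeartbeats 1000000 in
lemma aux_feasible (q p : ℕ) (E : Finset (ℕ × ℕ × ℕ)) (tri hedge : ℕ → ℕ × ℕ × ℕ)
    (hpq : p ≤ q)
    (H1 : ∀ b, b < q → (tri b).1 ∈ Finset.Icc 1 q ∧ (tri b).2.1 ∈ Finset.Icc 1 q ∧
      (tri b).2.2 ∈ Finset.Icc 1 q)
    (H2 : ∀ b, b < q → hedge b ∈ E)
    (H3 : ∀ b, b < q → ∀ b', b' < q → b ≠ b' →
      (tri b).1 ≠ (tri b').1 ∧ (tri b).2.1 ≠ (tri b').2.1 ∧ (tri b).2.2 ≠ (tri b').2.2 ∧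
        hedge b ≠ hedge b')
    (H4 : ∀ b, b < p → hedge b = tri b) :
    ∃ (S : Finset UTask) (start : UTask → ℤ),
      Feasible q E S start ∧ S.card = p + 7 * q := by
  classical
  refine ⟨(Finset.range q).biUnion (elemsOf q p tri hedge), startF q E p tri hedge,
    ⟨?_, ?_, ?_⟩, ?_⟩
  · -- validity
    intro t ht
    obtain ⟨b, hb, htb⟩ := Finset.mem_biUnion.1 ht
    exact (task_facts H1 H2 (Finset.mem_range.1 hb) htb).1
  · -- within the path
    intro t ht
    obtain ⟨b, hb, htb⟩ := Finset.mem_biUnion.1 ht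
    have hbq := Finset.mem_range.1 hb
    have hse := startF_eq E H3 hbq htb
    obtain ⟨-, hr0, hr2⟩ := task_facts H1 H2 hbq htb
    have hA0 : (0:ℤ) ≤ (Aval q E : ℤ) := by positivity
    have hb0 : (0:ℤ) ≤ (b:ℤ) := by positivity
    have hbq' : (b:ℤ) + 1 ≤ (q:ℤ) := by exact_mod_cast hbq
    have hbs : blockStart q E b = (b:ℤ) * (2 * (Aval q E : ℤ) + 1) := rfl
    have hNE : numEdges q E = (2 * (Aval q E : ℤ) + 1) * (q:ℤ) - 1 := rfl
    constructor
    · rw [hse]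
      have : (0:ℤ) ≤ blockStart q E b := by rw [hbs]; positivity
      linarith
    · rw [hse]
      have hmul : (b:ℤ) * (2 * (Aval q E : ℤ) + 1) + (2 * (Aval q E : ℤ) + 1)
          ≤ (q:ℤ) * (2 * (Aval q E : ℤ) + 1) := by
        nlinarith
      rw [hbs] at hse ⊢
      rw [hNE]
      linarith
  · -- capacity
    intro e he0 he1
    set A : ℤ := (Aval q E : ℤ) with hA
    have hA0 : (0:ℤ) ≤ A := by rw [hA]; positivity
    have hmu := mu_one q E
    have hAq : A = 5 * (mu q E : ℤ) + 4 := Aval_eq q E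
    set D : ℤ := 2 * A + 1 with hD
    have hDpos : 0 < D := by omega
    have hNE : numEdges q E = D * (q:ℤ) - 1 := by rw [numEdges, hD, hA]
    have hmod0 : 0 ≤ e % D := Int.emod_nonneg e (ne_of_gt hDpos)
    have hmodD : e % D < D := Int.emod_lt_of_pos e hDpos
    have hdiv : D * (e / D) + e % D = e := Int.mul_ediv_add_emod e D
    have hdiv0 : 0 ≤ e / D := Int.ediv_nonneg he0 hDpos.le
    set bn : ℕ := (e / D).toNat with hbn
    have hbnZ : (bn : ℤ) = e / D := Int.toNat_of_nonneg hdiv0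
    set c : ℤ := blockStart q E bn with hc
    have hcD : c = (bn:ℤ) * D := by rw [hc, blockStart, hD, hA]
    have hec : e - c = e % D := by
      rw [hcD, hbnZ]
      linarith [mul_comm (e / D) D]
    have hce1 : c ≤ e := by omega
    have hce2 : e < c + D := by omega
    have hbnq : bn < q := by
      by_contra hge
      push_neg at hge
      have hq : (q:ℤ) ≤ (bn:ℤ) := by exact_mod_cast hge
      have h2 : (q:ℤ) * D ≤ (bn:ℤ) * D := mul_le_mul_of_nonneg_right hq hDpos.le
      rw [hNE] at he1
      have h3 := hce1
      rw [hcD] at h3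
      linarith [mul_comm D (q:ℤ)]
    have hkey : ∀ t ∈ (Finset.range q).biUnion (elemsOf q p tri hedge),
        e ∈ sched q E (startF q E p tri hedge) t →
        t ∈ elemsOf q p tri hedge bn ∧ e < c + 2 * A := by
      intro t ht hsch
      obtain ⟨b', hb', htb⟩ := Finset.mem_biUnion.1 ht
      have hb'q := Finset.mem_range.1 hb'
      have hse := startF_eq E H3 hb'q htb
      obtain ⟨-, hr0, hr2⟩ := task_facts H1 H2 hb'q htb
      rw [sched, Finset.mem_Ico, hse] at hsch
      rw [← hA] at hr2
      have hbs' : blockStart q E b' = (b':ℤ) * D := by rw [blockStart, hD, hA]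
      rw [hbs'] at hsch
      have h1 : (b':ℤ) * D ≤ e := by linarith [hsch.1]
      have h2 : e < (b':ℤ) * D + 2 * A := by linarith [hsch.2]
      have hbb : b' = bn := by
        have hub : (b':ℤ) = (bn:ℤ) := by
          rcases lt_trichotomy (b':ℤ) (bn:ℤ) with hlt | heq | hgt
          · exfalso
            have hstep : (b':ℤ) + 1 ≤ (bn:ℤ) := by omega
            have hmul := mul_le_mul_of_nonneg_right hstep hDpos.le
            rw [add_mul, one_mul] at hmul
            have hcc := hce1
            rw [hcD] at hcc
            linarith
          · exact heq
          · exfalso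
            have hstep : (bn:ℤ) + 1 ≤ (b':ℤ) := by omega
            have hmul := mul_le_mul_of_nonneg_right hstep hDpos.le
            rw [add_mul, one_mul] at hmul
            have hcc := hce2
            rw [hcD] at hcc
            linarith
        exact_mod_cast hub
      subst hbb
      refine ⟨htb, ?_⟩
      rw [hcD]
      linarith
    have hfilter : ((Finset.range q).biUnion (elemsOf q p tri hedge)).filter
        (fun t => e ∈ sched q E (startF q E p tri hedge) t) =
        (elemsOf q p tri hedge bn).filter
        (fun t => e ∈ sched q E (startF q E p tri hedge) t) := by
      ext t
      simp only [Finset.mem_filter]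
      constructor
      · rintro ⟨ht, hs⟩
        exact ⟨(hkey t ht hs).1, hs⟩
      · rintro ⟨ht, hs⟩
        exact ⟨Finset.mem_biUnion.2 ⟨bn, Finset.mem_range.2 hbnq, ht⟩, hs⟩
    rw [hfilter]
    rcases lt_or_ge (e - c) (2 * A) with hr2A | hr2A
    swap
    · -- separator edge
      have hemp : (elemsOf q p tri hedge bn).filter
          (fun t => e ∈ sched q E (startF q E p tri hedge) t) = ∅ := by
        rw [Finset.filter_eq_empty_iff]
        intro t ht hs
        have h2A := (hkey t (Finset.mem_biUnion.2 ⟨bn, Finset.mem_range.2 hbnq, ht⟩) hs).2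
        omega
      rw [hemp, Finset.sum_empty]
      have hcap : cap q E e = 0 := by
        simp only [cap]
        rw [← hA, ← hD, ← hec]
        rw [if_neg (by omega), if_neg (by omega)]
      rw [hcap]
    · -- edge inside a block
      rw [Finset.sum_filter]
      have hcap : cap q E e = if e - c < A then 4 * A + 4 else 4 * A := by
        simp only [cap]
        rw [← hA, ← hD, ← hec]
        rcases lt_or_ge (e - c) A with h | h
        · rw [if_pos h, if_pos h]
        · rw [if_neg (by omega), if_pos (by omega), if_neg (by omega)]
      rw [hcap]
      have hswap : ∑ t ∈ elemsOf q p tri hedge bn,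
          (if e ∈ sched q E (startF q E p tri hedge) t then taskDem q E t else 0) =
          ∑ t ∈ elemsOf q p tri hedge bn,
          (if c + relStart q E t ≤ e ∧ e < c + relStart q E t + taskLen q E t
            then taskDem q E t else 0) := by
        apply Finset.sum_congr rfl
        intro t ht
        simp only [sched, Finset.mem_Ico, startF_eq E H3 hbnq ht, ← hc, add_assoc]
      rw [hswap]
      have hbx : 10 * xnum q (tri bn).1 ≤ (mu q E : ℤ) - 1 := by
        have h := elemVal_bound q E (u := Elem.X (tri bn).1) (H1 bn hbnq).1
        simp only [elemVal] at h
        linarith [le_abs_self (xnum q (tri bn).1)]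
      have hby : 10 * ynum q (tri bn).2.1 ≤ (mu q E : ℤ) - 1 := by
        have h := elemVal_bound q E (u := Elem.Y (tri bn).2.1) (H1 bn hbnq).2.1
        simp only [elemVal] at h
        linarith [le_abs_self (ynum q (tri bn).2.1)]
      have hbz : 10 * znum q (tri bn).2.2 ≤ (mu q E : ℤ) - 1 := by
        have h := elemVal_bound q E (u := Elem.Z (tri bn).2.2) (H1 bn hbnq).2.2
        simp only [elemVal] at h
        linarith [le_abs_self (znum q (tri bn).2.2)]
      have hbh : -(10 * hnum q (hedge bn)) ≤ (mu q E : ℤ) - 1 := by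
        have h := elemVal_bound q E (u := Elem.H (hedge bn)) (H2 bn hbnq)
        simp only [elemVal] at h
        linarith [neg_abs_le (hnum q (hedge bn))]
      have hx1 := xnum_pos q (tri bn).1
      have hy1 := ynum_pos q (tri bn).2.1
      have hz1 := znum_pos q (tri bn).2.2
      have hh7 := hnum_neg q (hedge bn)
      by_cases hbp : bn < p
      · have hsum0 : xnum q (tri bn).1 + ynum q (tri bn).2.1 + znum q (tri bn).2.2
            + hnum q (hedge bn) = 0 := by
          rw [H4 bn hbp, xnum, ynum, znum, hnum]; ring
        simp only [elemsOf, if_pos hbp]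
        rw [Finset.sum_insert (by simp), Finset.sum_insert (by simp),
          Finset.sum_insert (by simp), Finset.sum_insert (by simp),
          Finset.sum_insert (by simp), Finset.sum_insert (by simp),
          Finset.sum_insert (by simp), Finset.sum_singleton]
        simp only [relStart, taskDem, taskLen, elemVal]
        simp only [← hA, add_zero]
        exact cap_matched A c e _ _ _ _ hx1 hy1 hz1 hh7 hsum0 hce1 (by omega)
      · have hsA : 10 * (xnum q (tri bn).1 + ynum q (tri bn).2.1 + znum q (tri bn).2.2)
            ≤ A + 1 := by omega
        simp only [elemsOf, if_neg hbp]
        by_cases hP : sB q (tri bn) + hnum q (hedge bn) < 0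
        · rw [decide_eq_true hP]
          rw [Finset.sum_insert (by simp), Finset.sum_insert (by simp),
            Finset.sum_insert (by simp), Finset.sum_insert (by simp),
            Finset.sum_insert (by simp), Finset.sum_insert (by simp),
            Finset.sum_singleton]
          simp only [relStart, taskDem, taskLen, elemVal]
          simp only [← hA, add_zero]
          rw [sB] at hP
          exact cap_unL A c e _ _ _ _ hx1 hy1 hz1 hh7 (by omega) hce1 (by omega)
        · rw [decide_eq_false hP]
          rw [Finset.sum_insert (by simp), Finset.sum_insert (by simp),
            Finset.sum_insert (by simp), Finset.sum_insert (by simp),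
            Finset.sum_insert (by simp), Finset.sum_insert (by simp),
            Finset.sum_singleton]
          simp only [relStart, taskDem, taskLen, elemVal]
          simp only [← hA, add_zero]
          rw [sB] at hP
          push_neg at hP
          exact cap_unR A c e _ _ _ _ hx1 hy1 hz1 hh7 (by omega) hsA hce1 (by omega)
  · -- cardinality
    have hdisj : ∀ b ∈ Finset.range q, ∀ b' ∈ Finset.range q, b ≠ b' →
        Disjoint (elemsOf q p tri hedge b) (elemsOf q p tri hedge b') := by
      intro b hb b' hb' hne
      rw [Finset.disjoint_left]
      intro t ht ht'
      exact hne (elemsOf_unique H3 (Finset.mem_range.1 hb) (Finset.mem_range.1 hb') ht ht')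
    rw [Finset.card_biUnion hdisj]
    have hcongr : ∀ b ∈ Finset.range q, (elemsOf q p tri hedge b).card =
        if b < p then 8 else 7 := fun b _ => elemsOf_card q p tri hedge b
    rw [Finset.sum_congr rfl hcongr]
    have hsplit : Finset.range q = Finset.range p ∪ Finset.Ico p q := by
      rw [Finset.range_eq_Ico, Finset.range_eq_Ico]
      exact (Finset.Ico_union_Ico_eq_Ico (Nat.zero_le p) hpq).symm
    have hdis : Disjoint (Finset.range p) (Finset.Ico p q) := by
      rw [Finset.range_eq_Ico]; exact Finset.Ico_disjoint_Ico_consecutive 0 p q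
    rw [hsplit, Finset.sum_union hdis]
    have e1 : ∑ b ∈ Finset.range p, (if b < p then (8:ℕ) else 7) = 8 * p := by
      rw [Finset.sum_congr rfl (fun b hb => if_pos (Finset.mem_range.1 hb)),
        Finset.sum_const, Finset.card_range, smul_eq_mul, Nat.mul_comm]
    have e2 : ∑ b ∈ Finset.Ico p q, (if b < p then (8:ℕ) else 7) = 7 * (q - p) := by
      rw [Finset.sum_congr rfl
          (fun b hb => if_neg (by have := (Finset.mem_Ico.1 hb).1; omega)),
        Finset.sum_const, Nat.card_Ico, smul_eq_mul, Nat.mul_comm]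
    rw [e1, e2]
    omega


lemma nodup_getD_ne {α : Type*} (l : List α) (d : α) (h : l.Nodup) {i j : ℕ}
    (hi : i < l.length) (hj : j < l.length) (hne : i ≠ j) : l.getD i d ≠ l.getD j d := by
  rw [List.getD_eq_getElem l d hi, List.getD_eq_getElem l d hj]
  intro hEq
  exact hne (h.getElem_inj_iff.mp hEq)

lemma getD_mem {α : Type*} (l : List α) (d : α) {i : ℕ} (hi : i < l.length) :
    l.getD i d ∈ l := by
  rw [List.getD_eq_getElem l d hi]
  exact List.getElem_mem hi

end Aux

/-- If `K` is a 3DM instance on node sets of size `q` in which every node occurs in at least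
one hyperedge, and `K` has a hypermatching of size `p`, then `σ(K)` has a feasible solution
consisting of `p + 7q` tasks. -/
theorem matching_to_schedule (q : ℕ) (E : Finset (ℕ × ℕ × ℕ)) (hE : ValidE q E)
    (hoccX : ∀ i ∈ Finset.Icc 1 q, ∃ h ∈ E, h.1 = i)
    (hoccY : ∀ j ∈ Finset.Icc 1 q, ∃ h ∈ E, h.2.1 = j)
    (hoccZ : ∀ l ∈ Finset.Icc 1 q, ∃ h ∈ E, h.2.2 = l)
    (M : Finset (ℕ × ℕ × ℕ)) (hME : M ⊆ E) (hM : Matching M) (p : ℕ) (hp : M.card = p) :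
    ∃ (S : Finset UTask) (start : UTask → ℤ),
      Feasible q E S start ∧ S.card = p + 7 * q := by
  classical
  have hMX : M.image Prod.fst ⊆ Finset.Icc 1 q := by
    intro i hi
    obtain ⟨h, hh, rfl⟩ := Finset.mem_image.1 hi
    exact (hE h (hME hh)).1
  have hMY : M.image (fun h => h.2.1) ⊆ Finset.Icc 1 q := by
    intro i hi
    obtain ⟨h, hh, rfl⟩ := Finset.mem_image.1 hi
    exact (hE h (hME hh)).2.1
  have hMZ : M.image (fun h => h.2.2) ⊆ Finset.Icc 1 q := by
    intro i hi
    obtain ⟨h, hh, rfl⟩ := Finset.mem_image.1 hi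
    exact (hE h (hME hh)).2.2
  have hcX : (M.image Prod.fst).card = p := by
    rw [Finset.card_image_of_injOn, hp]
    intro a ha b hb hab
    by_contra hne
    exact (hM a (Finset.mem_coe.1 ha) b (Finset.mem_coe.1 hb) hne).1 hab
  have hcY : (M.image (fun h => h.2.1)).card = p := by
    rw [Finset.card_image_of_injOn, hp]
    intro a ha b hb hab
    by_contra hne
    exact (hM a (Finset.mem_coe.1 ha) b (Finset.mem_coe.1 hb) hne).2.1 hab
  have hcZ : (M.image (fun h => h.2.2)).card = p := by
    rw [Finset.card_image_of_injOn, hp]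
    intro a ha b hb hab
    by_contra hne
    exact (hM a (Finset.mem_coe.1 ha) b (Finset.mem_coe.1 hb) hne).2.2 hab
  have hIcc : (Finset.Icc 1 q).card = q := by rw [Nat.card_Icc]; omega
  have hpq : p ≤ q := by
    rw [← hcX, ← hIcc]
    exact Finset.card_le_card hMX
  set UX := Finset.Icc 1 q \ M.image Prod.fst with hUX
  set UY := Finset.Icc 1 q \ M.image (fun h => h.2.1) with hUY
  set UZ := Finset.Icc 1 q \ M.image (fun h => h.2.2) with hUZ
  set LM := M.toList with hLM
  set LX := UX.toList with hLX
  set LY := UY.toList with hLY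
  set LZ := UZ.toList with hLZ
  have hLMlen : LM.length = p := by rw [hLM, Finset.length_toList, hp]
  have hLXlen : LX.length = q - p := by
    rw [hLX, Finset.length_toList, hUX, Finset.card_sdiff_of_subset hMX, hcX, hIcc]
  have hLYlen : LY.length = q - p := by
    rw [hLY, Finset.length_toList, hUY, Finset.card_sdiff_of_subset hMY, hcY, hIcc]
  have hLZlen : LZ.length = q - p := by
    rw [hLZ, Finset.length_toList, hUZ, Finset.card_sdiff_of_subset hMZ, hcZ, hIcc]
  set tri : ℕ → ℕ × ℕ × ℕ := fun b =>
    if b < p then LM.getD b (0, 0, 0)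
    else (LX.getD (b - p) 0, LY.getD (b - p) 0, LZ.getD (b - p) 0) with htri
  have htriM : ∀ b, b < p → tri b ∈ M := by
    intro b hb
    have e1 : tri b = LM.getD b (0, 0, 0) := by simp only [htri, if_pos hb]
    rw [e1]
    exact Finset.mem_toList.1 (hLM ▸ getD_mem LM _ (by omega))
  have htriub : ∀ b, p ≤ b → tri b =
      (LX.getD (b - p) 0, LY.getD (b - p) 0, LZ.getD (b - p) 0) := by
    intro b hb
    simp only [htri, if_neg (Nat.not_lt.2 hb)]
  have hXmem : ∀ b, p ≤ b → b < q → (tri b).1 ∈ UX := by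
    intro b hb hbq
    rw [htriub b hb]
    exact Finset.mem_toList.1 (hLX ▸ getD_mem LX 0 (by omega))
  have hYmem : ∀ b, p ≤ b → b < q → (tri b).2.1 ∈ UY := by
    intro b hb hbq
    rw [htriub b hb]
    exact Finset.mem_toList.1 (hLY ▸ getD_mem LY 0 (by omega))
  have hZmem : ∀ b, p ≤ b → b < q → (tri b).2.2 ∈ UZ := by
    intro b hb hbq
    rw [htriub b hb]
    exact Finset.mem_toList.1 (hLZ ▸ getD_mem LZ 0 (by omega))
  have H1 : ∀ b, b < q → (tri b).1 ∈ Finset.Icc 1 q ∧ (tri b).2.1 ∈ Finset.Icc 1 q ∧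
      (tri b).2.2 ∈ Finset.Icc 1 q := by
    intro b hb
    rcases Nat.lt_or_ge b p with h1 | h1
    · have hmem := htriM b h1
      exact ⟨hMX (Finset.mem_image_of_mem _ hmem), hMY (Finset.mem_image_of_mem _ hmem),
        hMZ (Finset.mem_image_of_mem _ hmem)⟩
    · have hx := hXmem b h1 hb
      have hy := hYmem b h1 hb
      have hz := hZmem b h1 hb
      rw [hUX, Finset.mem_sdiff] at hx
      rw [hUY, Finset.mem_sdiff] at hy
      rw [hUZ, Finset.mem_sdiff] at hz
      exact ⟨hx.1, hy.1, hz.1⟩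
  have htri_ne : ∀ b, b < p → ∀ b', b' < p → b ≠ b' → tri b ≠ tri b' := by
    intro b hb b' hb' hne
    have e1 : tri b = LM.getD b (0, 0, 0) := by simp only [htri, if_pos hb]
    have e2 : tri b' = LM.getD b' (0, 0, 0) := by simp only [htri, if_pos hb']
    rw [e1, e2]
    exact nodup_getD_ne LM _ (by rw [hLM]; exact Finset.nodup_toList M)
      (by omega) (by omega) hne
  have htriX : ∀ b, b < q → ∀ b', b' < q → b ≠ b' → (tri b).1 ≠ (tri b').1 := by
    have key : ∀ b b', b < p → p ≤ b' → b' < q → (tri b).1 ≠ (tri b').1 := by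
      intro b b' hb hb' hb'q hEq
      have h1 : (tri b).1 ∈ M.image Prod.fst := Finset.mem_image_of_mem _ (htriM b hb)
      have h2 := hXmem b' hb' hb'q
      rw [hUX, Finset.mem_sdiff] at h2
      exact h2.2 (hEq ▸ h1)
    intro b hb b' hb' hne
    rcases Nat.lt_or_ge b p with h1 | h1 <;> rcases Nat.lt_or_ge b' p with h2 | h2
    · exact (hM _ (htriM b h1) _ (htriM b' h2) (htri_ne b h1 b' h2 hne)).1
    · exact key b b' h1 h2 hb'
    · exact (key b' b h2 h1 hb).symm
    · rw [htriub b h1, htriub b' h2]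
      exact nodup_getD_ne LX _ (by rw [hLX]; exact Finset.nodup_toList UX)
        (by omega) (by omega) (by omega)
  have htriY : ∀ b, b < q → ∀ b', b' < q → b ≠ b' → (tri b).2.1 ≠ (tri b').2.1 := by
    have key : ∀ b b', b < p → p ≤ b' → b' < q → (tri b).2.1 ≠ (tri b').2.1 := by
      intro b b' hb hb' hb'q hEq
      have h1 : (tri b).2.1 ∈ M.image (fun h => h.2.1) :=
        Finset.mem_image_of_mem _ (htriM b hb)
      have h2 := hYmem b' hb' hb'q
      rw [hUY, Finset.mem_sdiff] at h2
      exact h2.2 (hEq ▸ h1)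
    intro b hb b' hb' hne
    rcases Nat.lt_or_ge b p with h1 | h1 <;> rcases Nat.lt_or_ge b' p with h2 | h2
    · exact (hM _ (htriM b h1) _ (htriM b' h2) (htri_ne b h1 b' h2 hne)).2.1
    · exact key b b' h1 h2 hb'
    · exact (key b' b h2 h1 hb).symm
    · rw [htriub b h1, htriub b' h2]
      exact nodup_getD_ne LY _ (by rw [hLY]; exact Finset.nodup_toList UY)
        (by omega) (by omega) (by omega)
  have htriZ : ∀ b, b < q → ∀ b', b' < q → b ≠ b' → (tri b).2.2 ≠ (tri b').2.2 := by
    have key : ∀ b b', b < p → p ≤ b' → b' < q → (tri b).2.2 ≠ (tri b').2.2 := by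
      intro b b' hb hb' hb'q hEq
      have h1 : (tri b).2.2 ∈ M.image (fun h => h.2.2) :=
        Finset.mem_image_of_mem _ (htriM b hb)
      have h2 := hZmem b' hb' hb'q
      rw [hUZ, Finset.mem_sdiff] at h2
      exact h2.2 (hEq ▸ h1)
    intro b hb b' hb' hne
    rcases Nat.lt_or_ge b p with h1 | h1 <;> rcases Nat.lt_or_ge b' p with h2 | h2
    · exact (hM _ (htriM b h1) _ (htriM b' h2) (htri_ne b h1 b' h2 hne)).2.2
    · exact key b b' h1 h2 hb'
    · exact (key b' b h2 h1 hb).symm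
    · rw [htriub b h1, htriub b' h2]
      exact nodup_getD_ne LZ _ (by rw [hLZ]; exact Finset.nodup_toList UZ)
        (by omega) (by omega) (by omega)
  set hedge : ℕ → ℕ × ℕ × ℕ := fun b =>
    if b < p then tri b
    else if hk : (tri b).2.2 ∈ Finset.Icc 1 q then (hoccZ _ hk).choose else (0, 0, 0)
    with hhedge
  have hedge_lt : ∀ b, b < p → hedge b = tri b := by
    intro b hb
    simp only [hhedge, if_pos hb]
  have hedge_ub : ∀ b, p ≤ b → b < q → hedge b ∈ E ∧ (hedge b).2.2 = (tri b).2.2 := by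
    intro b hb hbq
    have hk : (tri b).2.2 ∈ Finset.Icc 1 q := (H1 b hbq).2.2
    have e1 : hedge b = (hoccZ _ hk).choose := by
      simp only [hhedge, if_neg (Nat.not_lt.2 hb), dif_pos hk]
    rw [e1]
    obtain ⟨hmem, hzz⟩ := (hoccZ _ hk).choose_spec
    exact ⟨hmem, hzz⟩
  have H2 : ∀ b, b < q → hedge b ∈ E := by
    intro b hb
    rcases Nat.lt_or_ge b p with h1 | h1
    · rw [hedge_lt b h1]
      exact hME (htriM b h1)
    · exact (hedge_ub b h1 hb).1
  have H4 : ∀ b, b < p → hedge b = tri b := hedge_lt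
  have hhedge_ne : ∀ b, b < q → ∀ b', b' < q → b ≠ b' → hedge b ≠ hedge b' := by
    have key : ∀ b b', b < p → p ≤ b' → b' < q → hedge b ≠ hedge b' := by
      intro b b' hb hb' hb'q hEq
      have h1 : (hedge b).2.2 ∈ M.image (fun h => h.2.2) := by
        rw [hedge_lt b hb]
        exact Finset.mem_image_of_mem _ (htriM b hb)
      have h2 : (hedge b').2.2 ∈ UZ := by
        rw [(hedge_ub b' hb' hb'q).2]
        exact hZmem b' hb' hb'q
      rw [hUZ, Finset.mem_sdiff] at h2
      exact h2.2 (hEq ▸ h1)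
    intro b hb b' hb' hne
    rcases Nat.lt_or_ge b p with h1 | h1 <;> rcases Nat.lt_or_ge b' p with h2 | h2
    · rw [hedge_lt b h1, hedge_lt b' h2]
      exact htri_ne b h1 b' h2 hne
    · exact key b b' h1 h2 hb'
    · exact (key b' b h2 h1 hb).symm
    · intro hEq
      have hzz := congrArg (fun h : ℕ × ℕ × ℕ => h.2.2) hEq
      rw [(hedge_ub b h1 hb).2, (hedge_ub b' h2 hb').2] at hzz
      exact htriZ b hb b' hb' hne hzz
  have H3 : ∀ b, b < q → ∀ b', b' < q → b ≠ b' →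
      (tri b).1 ≠ (tri b').1 ∧ (tri b).2.1 ≠ (tri b').2.1 ∧ (tri b).2.2 ≠ (tri b').2.2 ∧
        hedge b ≠ hedge b' := by
    intro b hb b' hb' hne
    exact ⟨htriX b hb b' hb' hne, htriY b hb b' hb' hne, htriZ b hb b' hb' hne,
      hhedge_ne b hb b' hb' hne⟩
  exact aux_feasible q p E tri hedge hpq H1 H2 H3 H4
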